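/- In ℝ^3, the convex hull P of Δ(1,2,3) ∪ {(1,1,1)} satisfies Δ(1,2,3) ⊆ P ⊆ ∇(1,2,3), yet P is not Borel-fixed: indeed (1,1,1) ∈ P but (1,0,2) ∉ P. -/

import Mathlib

/-- The elementary Borel move on `ℝ^m`: for `i < m` it sends `(a₁,…,a_m)` to
`(a₁,…,a_{i-1}, 0, a_i + a_{i+1}, a_{i+2},…,a_m)`, and for the last index it sends
`(a₁,…,a_m)` to `(a₁,…,a_{m-1}, 0)`. -/
def borelMove (m : ℕ) (i : Fin m) (a : Fin m → ℝ) : Fin m → ℝ :=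
  if h : (i : ℕ) + 1 < m then
    Function.update (Function.update a i 0) ⟨(i : ℕ) + 1, h⟩ (a i + a ⟨(i : ℕ) + 1, h⟩)
  else Function.update a i 0

/-- A set `P ⊆ ℝ^m_{≥0}` is Borel-fixed if it is stable under all elementary Borel moves:
`(a₁,…,a_m) ∈ P` implies `(a₁,…,a_{i-1},0,a_i+a_{i+1},a_{i+2},…,a_m) ∈ P` for `i ≤ m-1`,
and `(a₁,…,a_{m-1},0) ∈ P`. -/
def BorelFixedPt (m : ℕ) (P : Set (Fin m → ℝ)) : Prop :=
  ∀ a ∈ P, ∀ i : Fin m, borelMove m i a ∈ P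

/-- The simplex `Δ(t₁,…,t_m) ⊆ ℝ^m`: convex hull of `0` and the points `tᵢ·eᵢ`. -/
def simplexSet (m : ℕ) (t : Fin m → ℝ) : Set (Fin m → ℝ) :=
  convexHull ℝ (insert (0 : Fin m → ℝ) {x | ∃ i : Fin m, x = Pi.single i (t i)})

/-- The polytope `∇(t₁,…,t_m) := {ν ∈ ℝ^m_{≥0} : ν₁ + … + νᵢ ≤ tᵢ for all i}`. -/
def nablaSet (m : ℕ) (t : Fin m → ℝ) : Set (Fin m → ℝ) :=
  {ν | (∀ i, 0 ≤ ν i) ∧ ∀ i : Fin m, ∑ j ∈ Finset.Iic i, ν j ≤ t i}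

/-- In `ℝ³`, the convex hull `P` of `Δ(1,2,3) ∪ {(1,1,1)}` satisfies
`Δ(1,2,3) ⊆ P ⊆ ∇(1,2,3)`, yet `P` is not Borel-fixed: `(1,1,1) ∈ P` but `(1,0,2) ∉ P`. -/
lemma nabla_convex (m : ℕ) (t : Fin m → ℝ) : Convex ℝ (nablaSet m t) := by
  intro x hx y hy a b ha hb hab
  constructor
  · intro i
    have h1 := hx.1 i; have h2 := hy.1 i
    simp only [Pi.add_apply, Pi.smul_apply, smul_eq_mul]
    exact add_nonneg (mul_nonneg ha h1) (mul_nonneg hb h2)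
  · intro i
    have hxs := hx.2 i
    have hys := hy.2 i
    simp only [Pi.add_apply, Pi.smul_apply, smul_eq_mul]
    rw [Finset.sum_add_distrib, ← Finset.mul_sum, ← Finset.mul_sum]
    calc a * ∑ j ∈ Finset.Iic i, x j + b * ∑ j ∈ Finset.Iic i, y j
        ≤ a * t i + b * t i := by gcongr
      _ = t i := by rw [← add_mul, hab, one_mul]

lemma Iic0 : Finset.Iic (0 : Fin 3) = {0} := by decide
lemma Iic1 : Finset.Iic (1 : Fin 3) = {0, 1} := by decide
lemma Iic2 : Finset.Iic (2 : Fin 3) = {0, 1, 2} := by decide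

lemma gens_sub_nabla :
    insert (0 : Fin 3 → ℝ) {x | ∃ i : Fin 3, x = Pi.single i (![1,2,3] i)} ⊆
      nablaSet 3 ![1, 2, 3] := by
  rintro x (rfl | ⟨i, rfl⟩)
  · constructor
    · intro i; fin_cases i <;> norm_num
    · intro i; fin_cases i <;>
        simp [Iic0, Iic1, Iic2, Finset.sum_insert, Finset.sum_singleton] <;> norm_num
  · fin_cases i <;> constructor <;> intro j <;> fin_cases j <;>
      simp [Iic0, Iic1, Iic2, Finset.sum_insert, Finset.sum_singleton, Pi.single_apply] <;>
      norm_num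

lemma p_mem_nabla : (![1,1,1] : Fin 3 → ℝ) ∈ nablaSet 3 ![1,2,3] := by
  constructor
  · intro i; fin_cases i <;> norm_num
  · intro i; fin_cases i <;>
      simp [Iic0, Iic1, Iic2, Finset.sum_insert, Finset.sum_singleton] <;> norm_num

lemma halfspace_convex : Convex ℝ {x : Fin 3 → ℝ | 2 * x 0 + x 2 ≤ 3} := by
  have : IsLinearMap ℝ (fun x : Fin 3 → ℝ => 2 * x 0 + x 2) := by
    constructor <;> intros <;> simp <;> ring
  exact convex_halfSpace_le this 3

lemma gens_sub_half :
    insert (0 : Fin 3 → ℝ) {x | ∃ i : Fin 3, x = Pi.single i (![1,2,3] i)} ⊆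
      {x : Fin 3 → ℝ | 2 * x 0 + x 2 ≤ 3} := by
  rintro x (rfl | ⟨i, rfl⟩)
  · norm_num
  · fin_cases i <;> simp [Pi.single_apply] <;> norm_num

theorem not_borelFixed_example :
    simplexSet 3 ![1, 2, 3] ⊆ convexHull ℝ (simplexSet 3 ![1, 2, 3] ∪ {![1, 1, 1]}) ∧
    convexHull ℝ (simplexSet 3 ![1, 2, 3] ∪ {![1, 1, 1]}) ⊆ nablaSet 3 ![1, 2, 3] ∧
    (![1, 1, 1] : Fin 3 → ℝ) ∈ convexHull ℝ (simplexSet 3 ![1, 2, 3] ∪ {![1, 1, 1]}) ∧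
    (![1, 0, 2] : Fin 3 → ℝ) ∉ convexHull ℝ (simplexSet 3 ![1, 2, 3] ∪ {![1, 1, 1]}) ∧
    ¬ BorelFixedPt 3 (convexHull ℝ (simplexSet 3 ![1, 2, 3] ∪ {![1, 1, 1]})) := by
  have h1 : simplexSet 3 ![1, 2, 3] ⊆
      convexHull ℝ (simplexSet 3 ![1, 2, 3] ∪ {![1, 1, 1]}) :=
    Set.Subset.trans Set.subset_union_left (subset_convexHull ℝ _)
  have h3 : (![1, 1, 1] : Fin 3 → ℝ) ∈
      convexHull ℝ (simplexSet 3 ![1, 2, 3] ∪ {![1, 1, 1]}) :=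
    subset_convexHull ℝ _ (Set.mem_union_right _ rfl)
  have h2 : convexHull ℝ (simplexSet 3 ![1, 2, 3] ∪ {![1, 1, 1]}) ⊆ nablaSet 3 ![1, 2, 3] := by
    apply convexHull_min _ (nabla_convex 3 _)
    apply Set.union_subset
    · exact convexHull_min gens_sub_nabla (nabla_convex 3 _)
    · rintro x rfl
      exact p_mem_nabla
  have h4 : (![1, 0, 2] : Fin 3 → ℝ) ∉
      convexHull ℝ (simplexSet 3 ![1, 2, 3] ∪ {![1, 1, 1]}) := by
    intro hmem
    have hsub : convexHull ℝ (simplexSet 3 ![1, 2, 3] ∪ {![1, 1, 1]}) ⊆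
        {x : Fin 3 → ℝ | 2 * x 0 + x 2 ≤ 3} := by
      apply convexHull_min _ halfspace_convex
      apply Set.union_subset
      · exact convexHull_min gens_sub_half halfspace_convex
      · rintro x rfl
        show (2:ℝ) * 1 + 1 ≤ 3; norm_num
    have : (2:ℝ) * 1 + 2 ≤ 3 := hsub hmem
    norm_num at this
  refine ⟨h1, h2, h3, h4, ?_⟩
  intro hB
  have := hB _ h3 1
  have heq : borelMove 3 1 ![1, 1, 1] = ![1, 0, 2] := by
    funext j
    fin_cases j <;> simp [borelMove, Function.update] <;> norm_num
  rw [heq] at this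
  exact h4 this
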